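/- Let n ≥ 1, 0 ≤ β < α ≤ 1, and let p, b, k be integers with 1 ≤ p ≤ b ≤ n and 1 ≤ k ≤ n/b. Let C^{(p)} be the n×n matrix obtained from C_{α,β} by zeroing all entries below the p-th diagonal, i.e., (C^{(p)})[i,j] = c_{i−j} if 0 ≤ i−j < p and 0 otherwise. Then sens_{k,b}(C^{(p)})² ≤ k · Σ_{j=0}^{p−1} c_j². Moreover, if α = 1 then sens_{k,b}(C^{(p)})² ≤ k·(1 + log p)/(1 − β)², where log is the natural logarithm. -/

import Mathlib

open Finset Matrix

/-- `r_m = (1/4^m)·C(2m,m)`. -/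
noncomputable def rCoef (m : ℕ) : ℝ := (1 / 4 ^ m) * (Nat.choose (2 * m) m : ℝ)

/-- `c_m = Σ_{i=0}^{m} α^{m−i} r_{m−i} r_i β^i`. -/
noncomputable def cCoef (α β : ℝ) (m : ℕ) : ℝ :=
  ∑ i ∈ Finset.range (m + 1), α ^ (m - i) * rCoef (m - i) * rCoef i * β ^ i

/-- The `p`-banded square root factor `C^{(p)}`: the lower triangular Toeplitz matrix with
entries `c_{i−j}` for `0 ≤ i−j < p` and `0` otherwise. -/
noncomputable def CmatBanded (n p : ℕ) (α β : ℝ) : Matrix (Fin n) (Fin n) ℝ :=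
  Matrix.of fun i j =>
    if (j : ℕ) ≤ (i : ℕ) ∧ (i : ℕ) - (j : ℕ) < p then cCoef α β ((i : ℕ) - (j : ℕ)) else 0

/-- The `b`-min-separated `L2`-sensitivity with at most `k` participations. -/
noncomputable def sens (n b k : ℕ) (C : Matrix (Fin n) (Fin n) ℝ) : ℝ :=
  Real.sqrt (sSup { x : ℝ | ∃ π : Finset (Fin n), π.card ≤ k ∧
    (∀ i ∈ π, ∀ j ∈ π, i ≠ j → b ≤ Nat.dist (i : ℕ) (j : ℕ)) ∧
    x = ∑ i ∈ π, ∑ j ∈ π, (Cᵀ * C) i j })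

lemma rCoef_nonneg (m : ℕ) : 0 ≤ rCoef m := by unfold rCoef; positivity

lemma choose_identity (m : ℕ) :
    (m + 1) * Nat.choose (2 * (m + 1)) (m + 1) = 2 * (2 * m + 1) * Nat.choose (2 * m) m := by
  have h1 := Nat.add_one_mul_choose_eq (2 * m) m
  have h2 : Nat.choose (2 * m + 1) m = Nat.choose (2 * m + 1) (m + 1) := by
    have h := Nat.choose_symm (n := 2 * m + 1) (k := m + 1) (by omega)
    rw [show 2 * m + 1 - (m + 1) = m from by omega] at h
    exact h
  have h3 : Nat.choose (2 * (m + 1)) (m + 1)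
      = Nat.choose (2 * m + 1) m + Nat.choose (2 * m + 1) (m + 1) := by
    have he : 2 * (m + 1) = (2 * m + 1) + 1 := by ring
    rw [he, Nat.choose_succ_succ]
  calc (m + 1) * Nat.choose (2 * (m + 1)) (m + 1)
      = (m + 1) * (Nat.choose (2 * m + 1) m + Nat.choose (2 * m + 1) (m + 1)) := by rw [h3]
    _ = 2 * (Nat.choose (2 * m + 1) (m + 1) * (m + 1)) := by rw [h2]; ring
    _ = 2 * ((2 * m + 1) * Nat.choose (2 * m) m) := by rw [← h1]
    _ = 2 * (2 * m + 1) * Nat.choose (2 * m) m := by ring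

lemma rCoef_succ (m : ℕ) :
    rCoef (m + 1) = rCoef m * ((2 * (m : ℝ) + 1) / (2 * m + 2)) := by
  unfold rCoef
  have hc : ((m : ℝ) + 1) * (Nat.choose (2 * (m + 1)) (m + 1) : ℝ)
      = 2 * (2 * m + 1) * (Nat.choose (2 * m) m : ℝ) := by exact_mod_cast choose_identity m
  have hm : ((m : ℝ) + 1) ≠ 0 := by positivity
  have h4 : ((4 : ℝ) ^ m) ≠ 0 := by positivity
  field_simp
  linear_combination (2 * (4:ℝ) ^ m) * hc

lemma rCoef_mul_le (i j : ℕ) : rCoef i * rCoef j ≤ rCoef (i + j) := by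
  induction j with
  | zero => simp [rCoef]
  | succ q ih =>
    have h1 : rCoef i * rCoef (q + 1)
        = rCoef i * rCoef q * ((2 * (q : ℝ) + 1) / (2 * q + 2)) := by
      rw [rCoef_succ]; ring
    have h2 : rCoef (i + (q + 1))
        = rCoef (i + q) * ((2 * ((i : ℝ) + q) + 1) / (2 * ((i : ℝ) + q) + 2)) := by
      rw [show i + (q + 1) = (i + q) + 1 from by ring, rCoef_succ]
      push_cast; ring
    rw [h1, h2]
    have hfrac : ((2 * (q : ℝ) + 1) / (2 * q + 2)) ≤ (2 * ((i : ℝ) + q) + 1) / (2 * ((i : ℝ) + q) + 2) := by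
      rw [div_le_div_iff₀ (by positivity) (by positivity)]
      have : (0:ℝ) ≤ (i:ℝ) := Nat.cast_nonneg i
      nlinarith
    have h0 : (0:ℝ) ≤ (2 * (q : ℝ) + 1) / (2 * q + 2) := by positivity
    exact mul_le_mul ih hfrac h0 (rCoef_nonneg _)

lemma rCoef_sq_le (m : ℕ) : rCoef m ^ 2 ≤ 1 / ((m : ℝ) + 1) := by
  induction m with
  | zero => simp [rCoef]
  | succ q ih =>
    rw [rCoef_succ]
    push_cast
    have h0 := rCoef_nonneg q
    have key : ((2 * (q : ℝ) + 1) / (2 * q + 2)) ^ 2 * (1 / ((q : ℝ) + 1)) ≤ 1 / ((q : ℝ) + 1 + 1) := by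
      rw [div_pow, div_mul_div_comm, div_le_div_iff₀ (by positivity) (by positivity)]
      have : (0:ℝ) ≤ (q:ℝ) := Nat.cast_nonneg q
      nlinarith
    calc (rCoef q * ((2 * (q : ℝ) + 1) / (2 * q + 2))) ^ 2
        = ((2 * (q : ℝ) + 1) / (2 * q + 2)) ^ 2 * rCoef q ^ 2 := by ring
      _ ≤ ((2 * (q : ℝ) + 1) / (2 * q + 2)) ^ 2 * (1 / ((q : ℝ) + 1)) := by
          exact mul_le_mul_of_nonneg_left ih (by positivity)
      _ ≤ 1 / ((q : ℝ) + 1 + 1) := key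

lemma harm_le (p : ℕ) : ∑ m ∈ Finset.range p, (1 : ℝ) / (m + 1) ≤ 1 + Real.log p := by
  induction p with
  | zero => simp
  | succ q ih =>
    rcases Nat.eq_zero_or_pos q with h | h
    · subst h; simp
    · rw [Finset.sum_range_succ]
      have hq : (0:ℝ) < q := by exact_mod_cast h
      have hlog : Real.log q + 1 / ((q : ℝ) + 1) ≤ Real.log ((q : ℕ) + 1 : ℕ) := by
        have hx : (0:ℝ) < (q : ℝ) / ((q : ℝ) + 1) := by positivity
        have h1 := Real.log_le_sub_one_of_pos hx
        rw [Real.log_div (by positivity) (by positivity)] at h1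
        push_cast
        have : (q:ℝ)/((q:ℝ)+1) - 1 = -(1/((q:ℝ)+1)) := by field_simp; ring
        rw [this] at h1
        linarith
      push_cast at hlog ⊢
      linarith

lemma cCoef_nonneg {α β : ℝ} (hα : 0 ≤ α) (hβ : 0 ≤ β) (m : ℕ) : 0 ≤ cCoef α β m := by
  unfold cCoef
  apply Finset.sum_nonneg
  intro i _
  have h1 := rCoef_nonneg (m - i)
  have h2 := rCoef_nonneg i
  positivity

lemma cCoef_le_of_one {β : ℝ} (hβ : 0 ≤ β) (hβ1 : β < 1) (m : ℕ) :
    cCoef 1 β m ≤ rCoef m / (1 - β) := by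
  unfold cCoef
  have hpos : (0:ℝ) < 1 - β := by linarith
  have h1 : ∀ i ∈ Finset.range (m + 1),
      (1:ℝ) ^ (m - i) * rCoef (m - i) * rCoef i * β ^ i ≤ rCoef m * β ^ i := by
    intro i hi
    have him : i ≤ m := Nat.lt_succ_iff.mp (Finset.mem_range.mp hi)
    have h := rCoef_mul_le (m - i) i
    rw [Nat.sub_add_cancel him] at h
    have hb : (0:ℝ) ≤ β ^ i := pow_nonneg hβ i
    calc (1:ℝ) ^ (m - i) * rCoef (m - i) * rCoef i * β ^ i
        = rCoef (m - i) * rCoef i * β ^ i := by rw [one_pow]; ring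
      _ ≤ rCoef m * β ^ i := mul_le_mul_of_nonneg_right h hb
  have hgeom : ∑ i ∈ Finset.range (m + 1), β ^ i ≤ 1 / (1 - β) := by
    rw [geom_sum_eq (ne_of_lt hβ1) (m + 1)]
    have heq : (β ^ (m + 1) - 1) / (β - 1) = (1 - β ^ (m + 1)) / (1 - β) := by
      rw [div_eq_div_iff (by linarith) (by linarith)]; ring
    rw [heq]
    gcongr
    have : (0:ℝ) ≤ β ^ (m + 1) := pow_nonneg hβ _
    linarith
  calc ∑ i ∈ Finset.range (m + 1), (1:ℝ) ^ (m - i) * rCoef (m - i) * rCoef i * β ^ i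
      ≤ ∑ i ∈ Finset.range (m + 1), rCoef m * β ^ i := Finset.sum_le_sum h1
    _ = rCoef m * ∑ i ∈ Finset.range (m + 1), β ^ i := by rw [Finset.mul_sum]
    _ ≤ rCoef m * (1 / (1 - β)) := mul_le_mul_of_nonneg_left hgeom (rCoef_nonneg m)
    _ = rCoef m / (1 - β) := by ring

/-- `sens_{k,b}(C^{(p)})² ≤ k·Σ_{j=0}^{p−1} c_j²`, and moreover for `α = 1`,
`sens_{k,b}(C^{(p)})² ≤ k·(1 + log p)/(1 − β)²`. -/
theorem banded_sensitivity_bound (n p b k : ℕ) (hn : 1 ≤ n) (hp : 1 ≤ p) (hpb : p ≤ b)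
    (hbn : b ≤ n) (hk : 1 ≤ k) (hkn : k ≤ n / b)
    (α β : ℝ) (hβ : 0 ≤ β) (hβα : β < α) (hα : α ≤ 1) :
    sens n b k (CmatBanded n p α β) ^ 2 ≤ (k : ℝ) * ∑ j ∈ Finset.range p, cCoef α β j ^ 2 ∧
      (α = 1 →
        sens n b k (CmatBanded n p α β) ^ 2 ≤
          (k : ℝ) * (1 + Real.log p) / (1 - β) ^ 2) := by
  classical
  set C := CmatBanded n p α β with hC
  set B : ℝ := (k : ℝ) * ∑ j ∈ Finset.range p, cCoef α β j ^ 2 with hBdef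
  have hsq : (0:ℝ) ≤ ∑ j ∈ Finset.range p, cCoef α β j ^ 2 :=
    Finset.sum_nonneg fun j _ => sq_nonneg _
  have hB0 : 0 ≤ B := mul_nonneg (Nat.cast_nonneg k) hsq
  -- row bound
  have row : ∀ i : Fin n, ∑ l : Fin n, (C l i) ^ 2 ≤ ∑ d ∈ Finset.range p, cCoef α β d ^ 2 := by
    intro i
    have hrw : ∀ l : Fin n, (C l i) ^ 2
        = if ((i : ℕ) ≤ (l : ℕ) ∧ (l : ℕ) - (i : ℕ) < p) then cCoef α β ((l : ℕ) - (i : ℕ)) ^ 2 else 0 := by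
      intro l
      simp only [hC, CmatBanded, Matrix.of_apply]
      split <;> simp
    have hinj : Set.InjOn (fun l : Fin n => (l : ℕ) - (i : ℕ))
        ((Finset.univ.filter (fun l : Fin n => (i : ℕ) ≤ (l : ℕ) ∧ (l : ℕ) - (i : ℕ) < p)) : Finset (Fin n)) := by
      intro x hx y hy hxy
      simp only [Finset.coe_filter, Set.mem_setOf_eq] at hx hy
      have hxi := hx.2.1
      have hyi := hy.2.1
      simp only at hxy
      have : (x : ℕ) = (y : ℕ) := by omega
      exact Fin.ext this
    calc ∑ l : Fin n, (C l i) ^ 2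
        = ∑ l ∈ Finset.univ.filter (fun l : Fin n => (i : ℕ) ≤ (l : ℕ) ∧ (l : ℕ) - (i : ℕ) < p),
            cCoef α β ((l : ℕ) - (i : ℕ)) ^ 2 := by
          rw [Finset.sum_filter]
          exact Finset.sum_congr rfl fun l _ => hrw l
      _ = ∑ d ∈ (Finset.univ.filter (fun l : Fin n => (i : ℕ) ≤ (l : ℕ) ∧ (l : ℕ) - (i : ℕ) < p)).image
            (fun l : Fin n => (l : ℕ) - (i : ℕ)), cCoef α β d ^ 2 := by
          rw [Finset.sum_image hinj]
      _ ≤ ∑ d ∈ Finset.range p, cCoef α β d ^ 2 := by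
          apply Finset.sum_le_sum_of_subset_of_nonneg
          · intro d hd
            simp only [Finset.mem_image, Finset.mem_filter, Finset.mem_univ, true_and] at hd
            obtain ⟨l, hl, rfl⟩ := hd
            exact Finset.mem_range.mpr hl.2
          · intro d _ _
            exact sq_nonneg _
  -- off-diagonal vanishing
  have offd : ∀ i j : Fin n, b ≤ Nat.dist (i : ℕ) (j : ℕ) → (Cᵀ * C) i j = 0 := by
    intro i j hd
    rw [Matrix.mul_apply]
    apply Finset.sum_eq_zero
    intro l _
    simp only [Matrix.transpose_apply, hC, CmatBanded, Matrix.of_apply]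
    simp only [Nat.dist] at hd
    by_cases h1 : (i : ℕ) ≤ (l : ℕ) ∧ (l : ℕ) - (i : ℕ) < p
    · by_cases h2 : (j : ℕ) ≤ (l : ℕ) ∧ (l : ℕ) - (j : ℕ) < p
      · exfalso; omega
      · rw [if_neg h2, mul_zero]
    · rw [if_neg h1, zero_mul]
  -- main sup bound
  have h1 : sens n b k C ^ 2 ≤ B := by
    have hsup : sSup { x : ℝ | ∃ π : Finset (Fin n), π.card ≤ k ∧
        (∀ i ∈ π, ∀ j ∈ π, i ≠ j → b ≤ Nat.dist (i : ℕ) (j : ℕ)) ∧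
        x = ∑ i ∈ π, ∑ j ∈ π, (Cᵀ * C) i j } ≤ B := by
      apply Real.sSup_le _ hB0
      rintro x ⟨π, hcard, hsep, rfl⟩
      have hdiag : ∀ i ∈ π, ∑ j ∈ π, (Cᵀ * C) i j = (Cᵀ * C) i i := by
        intro i hi
        apply Finset.sum_eq_single_of_mem i hi
        intro j hj hne
        exact offd i j (hsep i hi j hj (Ne.symm hne))
      calc ∑ i ∈ π, ∑ j ∈ π, (Cᵀ * C) i j
          = ∑ i ∈ π, (Cᵀ * C) i i := Finset.sum_congr rfl hdiag
        _ = ∑ i ∈ π, ∑ l : Fin n, (C l i) ^ 2 := by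
            refine Finset.sum_congr rfl fun i _ => ?_
            rw [Matrix.mul_apply]
            exact Finset.sum_congr rfl fun l _ => by
              simp [Matrix.transpose_apply, sq]
        _ ≤ ∑ i ∈ π, ∑ d ∈ Finset.range p, cCoef α β d ^ 2 :=
            Finset.sum_le_sum fun i _ => row i
        _ = (π.card : ℝ) * ∑ d ∈ Finset.range p, cCoef α β d ^ 2 := by
            rw [Finset.sum_const, nsmul_eq_mul]
        _ ≤ B := by
            rw [hBdef]
            exact mul_le_mul_of_nonneg_right (by exact_mod_cast hcard) hsq
    show Real.sqrt _ ^ 2 ≤ B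
    calc Real.sqrt _ ^ 2 ≤ Real.sqrt B ^ 2 := by
          exact pow_le_pow_left₀ (Real.sqrt_nonneg _) (Real.sqrt_le_sqrt hsup) 2
      _ = B := Real.sq_sqrt hB0
  refine ⟨h1, ?_⟩
  intro hα1
  subst hα1
  have hβ1 : β < 1 := lt_of_lt_of_le hβα hα
  have h1β : (0:ℝ) < 1 - β := by linarith
  have h2 : ∑ j ∈ Finset.range p, cCoef 1 β j ^ 2 ≤ (1 + Real.log p) * (1 / (1 - β) ^ 2) := by
    have step : ∀ j ∈ Finset.range p,
        cCoef 1 β j ^ 2 ≤ (1 / ((j : ℝ) + 1)) * (1 / (1 - β) ^ 2) := by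
      intro j _
      have hc := cCoef_le_of_one hβ hβ1 j
      have hc0 := cCoef_nonneg (α := 1) (by norm_num) hβ j
      calc cCoef 1 β j ^ 2 ≤ (rCoef j / (1 - β)) ^ 2 := pow_le_pow_left₀ hc0 hc 2
        _ = rCoef j ^ 2 * (1 / (1 - β) ^ 2) := by
            field_simp
        _ ≤ (1 / ((j : ℝ) + 1)) * (1 / (1 - β) ^ 2) :=
            mul_le_mul_of_nonneg_right (rCoef_sq_le j) (by positivity)
    calc ∑ j ∈ Finset.range p, cCoef 1 β j ^ 2
        ≤ ∑ j ∈ Finset.range p, (1 / ((j : ℝ) + 1)) * (1 / (1 - β) ^ 2) :=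
          Finset.sum_le_sum step
      _ = (∑ j ∈ Finset.range p, 1 / ((j : ℝ) + 1)) * (1 / (1 - β) ^ 2) := by
          rw [← Finset.sum_mul]
      _ ≤ (1 + Real.log p) * (1 / (1 - β) ^ 2) :=
          mul_le_mul_of_nonneg_right (harm_le p) (by positivity)
  calc sens n b k C ^ 2 ≤ B := h1
    _ = (k : ℝ) * ∑ j ∈ Finset.range p, cCoef 1 β j ^ 2 := hBdef
    _ ≤ (k : ℝ) * ((1 + Real.log p) * (1 / (1 - β) ^ 2)) :=
        mul_le_mul_of_nonneg_left h2 (Nat.cast_nonneg k)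
    _ = (k : ℝ) * (1 + Real.log p) / (1 - β) ^ 2 := by
        field_simp
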